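/- Let e_1, e_2, e_3, e_4, e_5, e_6, e_7, e_8 be positive real numbers with e_3 e_6 > e_4 e_5, and let M be the 5×5 real matrix M = [[0, 0, −e_1, 0, 0], [0, 0, 0, −e_2, 0], [e_3, −e_4, −e_8, 0, 0], [−e_5, e_6, 0, −e_8, 0], [−e_7, −e_7, 0, 0, −e_8]]. Then every complex eigenvalue of M has strictly negative real part. -/

import Mathlib

set_option linter.unreachableTactic false
set_option linter.unusedTactic false
set_option maxHeartbeats 2000000

lemma quad_root_neg (e c : ℝ) (he : 0 < e) (hc : 0 < c) (z : ℂ)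
    (h : z ^ 2 + (e : ℂ) * z + (c : ℂ) = 0) : z.re < 0 := by
  have h1 := congrArg Complex.re h
  have h2 := congrArg Complex.im h
  simp [pow_two, Complex.add_re, Complex.add_im, Complex.mul_re, Complex.mul_im,
    Complex.ofReal_re, Complex.ofReal_im] at h1 h2
  set x := z.re; set y := z.im
  rcases mul_eq_zero.1 (show y * (x + x + e) = 0 by ring_nf; ring_nf at h2; linarith) with hy | hx
  · rw [hy] at h1
    nlinarith
  · nlinarith

/-- Every complex eigenvalue of the 5×5 Jacobian `M` of the three-mutant fast
subsystem has strictly negative real part, given `e₃ e₆ > e₄ e₅` and all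
`eᵢ > 0`. -/
theorem stmt_18 (e₁ e₂ e₃ e₄ e₅ e₆ e₇ e₈ : ℝ)
    (h₁ : 0 < e₁) (h₂ : 0 < e₂) (h₃ : 0 < e₃) (h₄ : 0 < e₄)
    (h₅ : 0 < e₅) (h₆ : 0 < e₆) (h₇ : 0 < e₇) (h₈ : 0 < e₈)
    (h36 : e₃ * e₆ > e₄ * e₅)
    (M : Matrix (Fin 5) (Fin 5) ℝ)
    (hM : M = !![0, 0, -e₁, 0, 0;
                 0, 0, 0, -e₂, 0;
                 e₃, -e₄, -e₈, 0, 0;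
                 -e₅, e₆, 0, -e₈, 0;
                 -e₇, -e₇, 0, 0, -e₈]) :
    ∀ z : ℂ, (z • (1 : Matrix (Fin 5) (Fin 5) ℂ) - M.map Complex.ofReal).det = 0 →
      z.re < 0 := by
  intro z hz
  -- abbreviations
  set S : ℝ := e₁ * e₃ + e₂ * e₆ with hS
  set P : ℝ := e₁ * e₂ * (e₃ * e₆ - e₄ * e₅) with hP
  set D : ℝ := (e₁ * e₃ - e₂ * e₆) ^ 2 + 4 * (e₁ * e₂ * (e₄ * e₅)) with hD
  have hD0 : 0 ≤ D := by positivity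
  have hsq : Real.sqrt D ^ 2 = D := Real.sq_sqrt hD0
  set a : ℝ := (S + Real.sqrt D) / 2 with ha
  set b : ℝ := (S - Real.sqrt D) / 2 with hb
  have hSpos : 0 < S := by positivity
  have hPpos : 0 < P := by
    have : 0 < e₃ * e₆ - e₄ * e₅ := by linarith
    positivity
  have hDS : D < S ^ 2 := by nlinarith
  have hsqrtS : Real.sqrt D < S := by
    nlinarith [Real.sqrt_nonneg D, hsq]
  have hbpos : 0 < b := by rw [hb]; linarith
  have hapos : 0 < a := by
    have := Real.sqrt_nonneg D
    rw [ha]; linarith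
  have hsum : a + b = S := by rw [ha, hb]; ring
  have hprod : a * b = P := by
    have : a * b = (S ^ 2 - Real.sqrt D ^ 2) / 4 := by rw [ha, hb]; ring
    rw [this, hsq, hS, hD, hP]; ring
  -- determinant factorization
  have hdet : (z • (1 : Matrix (Fin 5) (Fin 5) ℂ) - M.map Complex.ofReal).det =
      (z + e₈) * ((z ^ 2 + (e₈ : ℂ) * z + (a : ℂ)) * (z ^ 2 + (e₈ : ℂ) * z + (b : ℂ))) := by
    have hA : z • (1 : Matrix (Fin 5) (Fin 5) ℂ) - M.map Complex.ofReal =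
        !![z, 0, (e₁:ℂ), 0, 0;
           0, z, 0, (e₂:ℂ), 0;
           ((-e₃:ℝ):ℂ), ((e₄:ℝ):ℂ), z + (e₈:ℂ), 0, 0;
           ((e₅:ℝ):ℂ), ((-e₆:ℝ):ℂ), 0, z + (e₈:ℂ), 0;
           ((e₇:ℝ):ℂ), ((e₇:ℝ):ℂ), 0, 0, z + (e₈:ℂ)] := by
      subst hM
      ext i j
      fin_cases i <;> fin_cases j <;>
        simp [Matrix.one_apply, Matrix.vecHead, Matrix.vecTail] <;> push_cast <;> ring
    rw [hA]
    have hsumC : (a : ℂ) + (b : ℂ) = (e₁ : ℂ) * e₃ + (e₂ : ℂ) * e₆ := by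
      rw [← Complex.ofReal_add, hsum, hS]; push_cast; ring
    have hprodC : (a : ℂ) * (b : ℂ) = (e₁ : ℂ) * e₂ * ((e₃ : ℂ) * e₆ - (e₄ : ℂ) * e₅) := by
      rw [← Complex.ofReal_mul, hprod, hP]; push_cast; ring
    simp [Matrix.det_succ_row_zero, Fin.sum_univ_succ, Fin.succAbove]
    push_cast
    linear_combination (-(z + (e₈:ℂ)) * (z ^ 2 + (e₈:ℂ) * z)) * hsumC + (-(z + (e₈:ℂ))) * hprodC
  rw [hdet] at hz
  rcases mul_eq_zero.1 hz with h0 | h0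
  · have : z = -(e₈ : ℂ) := by linear_combination h0
    rw [this]
    simpa using h₈
  · rcases mul_eq_zero.1 h0 with h0 | h0
    · exact quad_root_neg e₈ a h₈ hapos z h0
    · exact quad_root_neg e₈ b h₈ hbpos z h0
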